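/- arXiv:2509.16657 — 2 statements merged into one kernel-verified Lean document; each statement's English description precedes it below -/
import Mathlib

section
/- For every nonnegative integer n, -1 is not an eigenvalue of the adjacency matrix A_{2n+1} of the antiregular graph on 2n+1 vertices. -/
open Finset Matrix

/-- The cograph `C(α₁,…,α_l)` obtained by the recursive construction
`C(α₁) = complement of K_{α₁}` and
`C(α₁,…,αᵢ) = complement of (C(α₁,…,αᵢ₋₁) ⊔ K_{αᵢ})`,
presented by its resulting explicit adjacency relation: two distinct vertices
in the same (0-based) block `i` are adjacent iff `l - 1 - i` is odd, and
vertices in different blocks `a < b` are adjacent iff `l - 1 - b` is even. -/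
def Cgraph (l : ℕ) (α : Fin l → ℕ) : SimpleGraph (Σ i : Fin l, Fin (α i)) where
  Adj u v := u ≠ v ∧ ((u.1 = v.1 ∧ Odd (l - 1 - u.1.val)) ∨
      (u.1 ≠ v.1 ∧ Even (l - 1 - max u.1.val v.1.val)))
  symm := by
    constructor
    rintro u v ⟨h1, h2⟩
    refine ⟨h1.symm, ?_⟩
    rcases h2 with ⟨he, ho⟩ | ⟨hne, hev⟩
    · exact Or.inl ⟨he.symm, he ▸ ho⟩
    · exact Or.inr ⟨hne.symm, by rwa [max_comm]⟩
  loopless := by constructor; rintro u ⟨h, -⟩; exact h rfl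

noncomputable instance {l : ℕ} {α : Fin l → ℕ} : DecidableRel (Cgraph l α).Adj :=
  fun _ _ => Classical.dec _

lemma adj_iff' (n : ℕ) (a b : Fin (2*n+1)) :
    (Cgraph (2*n+1) fun _ => 1).Adj ⟨a,0⟩ ⟨b,0⟩ ↔ b.val ≠ a.val ∧ Even (max a.val b.val) := by
  have hmax : max a.val b.val ≤ 2*n := by
    have h1 := a.isLt; have h2 := b.isLt; omega
  have hab : (⟨a,0⟩ : Σ _ : Fin (2*n+1), Fin 1) = ⟨b,0⟩ ↔ a = b := by
    constructor
    · intro h; exact congrArg Sigma.fst h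
    · rintro rfl; rfl
  show (⟨a,0⟩ : Σ _ : Fin (2*n+1), Fin 1) ≠ ⟨b,0⟩ ∧ ((a = b ∧ _) ∨ (a ≠ b ∧ Even (2*n+1-1 - max a.val b.val))) ↔ _
  rw [Ne, hab]
  have h2n : (2*n+1-1 : ℕ) = 2*n := rfl
  rw [h2n]
  constructor
  · rintro ⟨hne, (⟨he, -⟩ | ⟨-, hev⟩)⟩
    · exact absurd he hne
    · refine ⟨fun h => hne (Fin.val_injective h.symm), ?_⟩
      rwa [Nat.even_sub hmax, iff_true_intro (even_two_mul n), true_iff] at hev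
  · rintro ⟨hne, hev⟩
    have hne' : a ≠ b := fun h => hne (congrArg Fin.val h.symm)
    exact ⟨hne', Or.inr ⟨hne', by
      rw [Nat.even_sub hmax, iff_true_intro (even_two_mul n), true_iff]; exact hev⟩⟩

/-- `-1` is not an eigenvalue of the adjacency matrix of the antiregular graph
on `2n+1` vertices. -/
theorem stmt12 (n : ℕ) :
    ¬ ∃ x : (Σ i : Fin (2*n+1), Fin 1) → ℝ, x ≠ 0 ∧
      ((Cgraph (2*n+1) fun _ => 1).adjMatrix ℝ).mulVec x = (-1 : ℝ) • x := by
  rintro ⟨x, hx0, hx⟩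
  classical
  set y : ℕ → ℝ := fun k => if h : k < 2*n+1 then x ⟨⟨k,h⟩, 0⟩ else 0 with hy
  have hyval : ∀ (k : ℕ) (h : k < 2*n+1), y k = x ⟨⟨k,h⟩, 0⟩ := fun k h => dif_pos h
  have hynot : ∀ k, ¬(k < 2*n+1) → y k = 0 := fun k h => dif_neg h
  set W : ℕ → ℝ := fun m => ∑ b ∈ Finset.Ico m (2*n+1), if Even b then y b else 0 with hWdef
  set S : ℕ → ℝ := fun m => ∑ b ∈ Finset.range m, y b with hSdef
  have hSsucc : ∀ m, S (m+1) = S m + y m := fun m => Finset.sum_range_succ _ m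
  have hW2 : ∀ m, 2*n+1 ≤ m → W m = 0 := by
    intro m hm
    show (∑ b ∈ Finset.Ico m (2*n+1), if Even b then y b else 0) = 0
    rw [Finset.Ico_eq_empty (by omega), Finset.sum_empty]
  have hW1 : ∀ m, m < 2*n+1 → W m = (if Even m then y m else 0) + W (m+1) := by
    intro m hm
    show (∑ b ∈ Finset.Ico m (2*n+1), if Even b then y b else 0)
      = _ + (∑ b ∈ Finset.Ico (m+1) (2*n+1), if Even b then y b else 0)
    exact Finset.sum_eq_sum_Ico_succ_bot hm _
  have key : ∀ a : ℕ, a < 2*n+1 →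
      (if Even a then S a else 0) + W (a+1) = - y a := by
    intro a ha
    have h := congrFun hx ⟨⟨a, ha⟩, 0⟩
    simp only [mulVec, dotProduct, SimpleGraph.adjMatrix_apply, Pi.smul_apply, smul_eq_mul,
      ← Finset.univ_sigma_univ, Finset.sum_sigma, Fin.sum_univ_one] at h
    have hfin : ∀ b : Fin (2*n+1), x ⟨b,0⟩ = y b.val := fun b => (hyval b.1 b.2).symm
    simp only [adj_iff', hfin, ite_mul, one_mul, zero_mul] at h
    rw [Fin.sum_univ_eq_sum_range (fun k => if k ≠ a ∧ Even (max a k) then y k else 0)] at h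
    rw [Finset.range_eq_Ico, ← Finset.sum_Ico_consecutive _ (Nat.zero_le (a+1)) (by omega),
      ← Finset.range_eq_Ico] at h
    have e1 : (∑ b ∈ Finset.range (a+1), if b ≠ a ∧ Even (max a b) then y b else 0)
        = (if Even a then S a else 0) := by
      by_cases hea : Even a
      · rw [if_pos hea, Finset.sum_range_succ, if_neg (by simp)]
        rw [hSdef, add_zero]
        refine Finset.sum_congr rfl fun b hb => ?_
        rw [Finset.mem_range] at hb
        rw [if_pos ⟨by omega, by rwa [max_eq_left (le_of_lt hb)]⟩]
      · rw [if_neg hea]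
        refine Finset.sum_eq_zero fun b hb => ?_
        rw [Finset.mem_range] at hb
        rw [if_neg]
        rintro ⟨-, hev⟩
        exact hea (by rwa [max_eq_left (by omega)] at hev)
    have e2 : (∑ b ∈ Finset.Ico (a+1) (2*n+1), if b ≠ a ∧ Even (max a b) then y b else 0)
        = W (a+1) := by
      rw [hWdef]
      refine Finset.sum_congr rfl fun b hb => ?_
      rw [Finset.mem_Ico] at hb
      rw [max_eq_right (by omega)]
      by_cases he : Even b
      · rw [if_pos ⟨by omega, he⟩, if_pos he]
      · rw [if_neg (by tauto), if_neg he]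
    rw [e1, e2] at h
    rw [h, hyval a ha]; ring
  have hA : ∀ a, a < 2*n+1 → Even a → S a + y a + W (a+1) = 0 := by
    intro a ha hea
    have := key a ha
    rw [if_pos hea] at this
    linarith
  have hB : ∀ a, a < 2*n+1 → ¬Even a → y a + W (a+1) = 0 := by
    intro a ha hea
    have := key a ha
    rw [if_neg hea] at this
    linarith
  have hodd : ∀ k, 2*k+1 < 2*n+1 → y (2*k+1) = 0 := by
    intro k hk
    have h1 := hA (2*k) (by omega) ⟨k, two_mul k⟩
    have h2 := hA (2*k+2) (by omega) ⟨k+1, by ring⟩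
    have w1 := hW1 (2*k+1) (by omega)
    rw [if_neg (by simp [Nat.even_add_one, parity_simps])] at w1
    have w2 := hW1 (2*k+2) (by omega)
    rw [if_pos ⟨k+1, by ring⟩] at w2
    have s1 := hSsucc (2*k)
    have s2 := hSsucc (2*k+1)
    simp only [show 2*k+1+1 = 2*k+2 from rfl, show 2*k+2+1 = 2*k+3 from rfl] at *
    linarith
  have hWz : ∀ k, W (2*k+2) = 0 := by
    intro k
    by_cases h : 2*k+1 < 2*n+1
    · have hb := hB (2*k+1) h (by simp [Nat.even_add_one, parity_simps])
      have := hodd k h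
      linarith
    · exact hW2 _ (by omega)
  have heven : ∀ k, y (2*k+2) = 0 := by
    intro k
    by_cases h : 2*k+2 < 2*n+1
    · have w := hW1 (2*k+2) h
      rw [if_pos ⟨k+1, by ring⟩] at w
      have w3 : W (2*k+3) = W (2*k+4) := by
        by_cases h3 : 2*k+3 < 2*n+1
        · have h4 := hW1 (2*k+3) h3
          rw [if_neg (by simp [Nat.even_add_one, parity_simps])] at h4
          rw [h4, zero_add]
        · rw [hW2 _ (by omega), hW2 _ (by omega)]
      have z1 := hWz k
      have z2 : W (2*k+4) = 0 := by
        rw [show 2*k+4 = 2*(k+1)+2 by ring]; exact hWz (k+1)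
      simp only [show 2*k+2+1 = 2*k+3 from rfl] at *
      linarith
    · exact hynot _ h
  have hy0 : y 0 = 0 := by
    have h0 := hA 0 (by omega) Even.zero
    have hS0 : S 0 = 0 := Finset.sum_range_zero _
    have hw1 : W 1 = 0 := by
      by_cases h : 1 < 2*n+1
      · have h1 := hW1 1 h
        rw [if_neg (by simp)] at h1
        have h2 := hWz 0
        norm_num at h1 h2
        linarith
      · exact hW2 _ (by omega)
    linarith
  have hall : ∀ k, y k = 0 := by
    intro k
    by_cases hk : k < 2*n+1
    · rcases Nat.even_or_odd k with ⟨m, hm⟩ | ⟨m, hm⟩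
      · match m, hm with
        | 0, hm => rw [hm]; exact hy0
        | (j+1), hm =>
          rw [hm, show (j+1)+(j+1) = 2*j+2 by ring]
          exact heven j
      · rw [hm]; exact hodd m (by omega)
    · exact hynot k hk
  apply hx0
  funext u
  obtain ⟨⟨a, ha⟩, j⟩ := u
  have hj : j = 0 := Subsingleton.elim _ _
  subst hj
  have := hall a
  rw [hyval a ha] at this
  simpa using this
end

section
/- Let G = C(α₁,...,α_{2k}) with k ≥ 2 and α_{2k} ≥ 2. Then ε(G) has at most 2k + 2 distinct eigenvalues. -/
open Finset Matrix

/-- The eccentricity of a vertex: the largest distance from it to any vertex. -/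
noncomputable def ecc {V : Type*} [Fintype V] (G : SimpleGraph V) (v : V) : ℕ :=
  Finset.univ.sup fun u => G.dist v u

/-- The eccentricity matrix: entry `d(u,v)` if `d(u,v) = min (e u) (e v)`, else `0`. -/
noncomputable def eccMatrix {V : Type*} [Fintype V] (G : SimpleGraph V) :
    Matrix V V ℝ :=
  Matrix.of fun u v =>
    if G.dist u v = min (ecc G u) (ecc G v) then (G.dist u v : ℝ) else 0

section Aux

variable {k : ℕ} {α : Fin (2*k) → ℕ}

private lemma adj_iff (u v : Σ i : Fin (2*k), Fin (α i)) :
    (Cgraph (2*k) α).Adj u v ↔ u ≠ v ∧ ((u.1 = v.1 ∧ Odd (2*k - 1 - u.1.val)) ∨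
      (u.1 ≠ v.1 ∧ Even (2*k - 1 - max u.1.val v.1.val))) := Iff.rfl

private lemma sig_ne {l : ℕ} {β : Fin l → ℕ} {u : Σ i : Fin l, Fin (β i)}
    {b : Fin l} {t : Fin (β b)} (h : u.1.val ≠ b.val) : u ≠ ⟨b, t⟩ :=
  fun e => h (by rw [e])

private lemma fin_ne {l : ℕ} {a b : Fin l} (h : a.val ≠ b.val) : a ≠ b :=
  fun e => h (congrArg Fin.val e)

private lemma adj_to {u : Σ i : Fin (2*k), Fin (α i)} {b : Fin (2*k)}
    (t : Fin (α b)) (hne : u.1.val ≠ b.val)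
    (hev : Even (2*k - 1 - max u.1.val b.val)) :
    (Cgraph (2*k) α).Adj u ⟨b, t⟩ :=
  ⟨sig_ne hne, Or.inr ⟨fin_ne hne, hev⟩⟩

private lemma nadj_to {u : Σ i : Fin (2*k), Fin (α i)} {b : Fin (2*k)}
    (t : Fin (α b)) (hne : u.1.val ≠ b.val)
    (hev : ¬ Even (2*k - 1 - max u.1.val b.val)) :
    ¬ (Cgraph (2*k) α).Adj u ⟨b, t⟩ := by
  rintro ⟨-, ⟨h, -⟩ | ⟨-, he⟩⟩
  · exact hne (congrArg Fin.val h)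
  · exact hev he

/-- any two distinct nonadjacent vertices have a common neighbor -/
private lemma common_nbr (hk : 2 ≤ k) (hα : ∀ i, 1 ≤ α i)
    {u v : Σ i : Fin (2*k), Fin (α i)} (hne : u ≠ v)
    (hadj : ¬ (Cgraph (2*k) α).Adj u v) :
    ∃ w, (Cgraph (2*k) α).Adj u w ∧ (Cgraph (2*k) α).Adj v w := by
  rw [adj_iff, not_and_or, not_or] at hadj
  rcases hadj with h | ⟨h1, h2⟩
  · exact absurd hne (by simpa using h)
  have hu2 := u.1.isLt; have hv2 := v.1.isLt
  by_cases hb : u.1 = v.1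
  · -- same block
    by_cases hi : u.1.val = 2*k - 1
    · -- last block: use a vertex of block 0
      have hv : v.1.val = 2*k - 1 := by rw [← hb]; exact hi
      set b : Fin (2*k) := ⟨0, by omega⟩ with hbdef
      have hbval : b.val = 0 := rfl
      refine ⟨⟨b, ⟨0, hα _⟩⟩, adj_to _ (by omega) ?_, adj_to _ (by omega) ?_⟩
      · have h0 : 2*k - 1 - max u.1.val b.val = 0 := by omega
        rw [h0]; exact Even.zero
      · have h0 : 2*k - 1 - max v.1.val b.val = 0 := by omega
        rw [h0]; exact Even.zero
    · -- not last block: use a vertex of the last block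
      have hv : v.1.val ≠ 2*k - 1 := by rw [← hb]; exact hi
      set b : Fin (2*k) := ⟨2*k-1, by omega⟩ with hbdef
      have hbval : b.val = 2*k-1 := rfl
      refine ⟨⟨b, ⟨0, hα _⟩⟩, adj_to _ (by omega) ?_, adj_to _ (by omega) ?_⟩
      · have h0 : 2*k - 1 - max u.1.val b.val = 0 := by omega
        rw [h0]; exact Even.zero
      · have h0 : 2*k - 1 - max v.1.val b.val = 0 := by omega
        rw [h0]; exact Even.zero
  · -- different blocks: both blocks are below the last one
    have hodd : Odd (2*k - 1 - max u.1.val v.1.val) := by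
      rcases Nat.even_or_odd (2*k - 1 - max u.1.val v.1.val) with he | ho
      · exact absurd ⟨hb, he⟩ h2
      · exact ho
    have hmax : max u.1.val v.1.val < 2*k - 1 := by
      by_contra hc
      have heq : max u.1.val v.1.val = 2*k-1 := by omega
      rw [heq, Nat.sub_self] at hodd
      exact (Nat.not_odd_iff_even.mpr Even.zero) hodd
    set b : Fin (2*k) := ⟨2*k-1, by omega⟩ with hbdef
    have hbval : b.val = 2*k-1 := rfl
    refine ⟨⟨b, ⟨0, hα _⟩⟩, adj_to _ (by omega) ?_, adj_to _ (by omega) ?_⟩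
    · have h0 : 2*k - 1 - max u.1.val b.val = 0 := by omega
      rw [h0]; exact Even.zero
    · have h0 : 2*k - 1 - max v.1.val b.val = 0 := by omega
      rw [h0]; exact Even.zero

private lemma dist_eq_two (hk : 2 ≤ k) (hα : ∀ i, 1 ≤ α i)
    {u v : Σ i : Fin (2*k), Fin (α i)} (hne : u ≠ v)
    (hadj : ¬ (Cgraph (2*k) α).Adj u v) :
    (Cgraph (2*k) α).dist u v = 2 := by
  obtain ⟨w, hu, hv⟩ := common_nbr hk hα hne hadj
  set G := Cgraph (2*k) α
  have hle : G.dist u v ≤ 2 := by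
    have := SimpleGraph.dist_le
      (SimpleGraph.Walk.cons hu (SimpleGraph.Walk.cons hv.symm SimpleGraph.Walk.nil))
    simpa using this
  have hpos : 0 < G.dist u v := SimpleGraph.Reachable.pos_dist_of_ne
    ⟨SimpleGraph.Walk.cons hu (SimpleGraph.Walk.cons hv.symm SimpleGraph.Walk.nil)⟩ hne
  have hone : G.dist u v ≠ 1 := fun h => hadj (SimpleGraph.dist_eq_one_iff_adj.mp h)
  omega

private lemma dist_le_two (hk : 2 ≤ k) (hα : ∀ i, 1 ≤ α i)
    (u v : Σ i : Fin (2*k), Fin (α i)) :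
    (Cgraph (2*k) α).dist u v ≤ 2 := by
  by_cases hne : u = v
  · simp [hne, SimpleGraph.dist_self]
  by_cases hadj : (Cgraph (2*k) α).Adj u v
  · rw [SimpleGraph.dist_eq_one_iff_adj.mpr hadj]; omega
  · rw [dist_eq_two hk hα hne hadj]

/-- every vertex has a non-neighbor distinct from it -/
private lemma far (hk : 2 ≤ k) (hα : ∀ i, 1 ≤ α i)
    (j : Fin (2*k)) (hj : j.val = 2*k - 1) (hlast : 2 ≤ α j)
    (u : Σ i : Fin (2*k), Fin (α i)) :
    ∃ v, u ≠ v ∧ ¬ (Cgraph (2*k) α).Adj u v := by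
  by_cases hb : u.1 = j
  · -- last block: another vertex of the same block
    subst hb
    by_cases h0 : u.2.val = 0
    · refine ⟨⟨u.1, ⟨1, by omega⟩⟩, ?_, ?_⟩
      · intro h
        have hval : u.2.val = 1 :=
          congrArg (fun z : (Σ i : Fin (2*k), Fin (α i)) => z.2.val) h
        omega
      · rintro ⟨-, ⟨-, ho⟩ | ⟨h, -⟩⟩
        · rw [hj, Nat.sub_self] at ho
          exact (Nat.not_odd_iff_even.mpr Even.zero) ho
        · exact h rfl
    · refine ⟨⟨u.1, ⟨0, by omega⟩⟩, ?_, ?_⟩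
      · intro h
        have hval : u.2.val = 0 :=
          congrArg (fun z : (Σ i : Fin (2*k), Fin (α i)) => z.2.val) h
        exact h0 hval
      · rintro ⟨-, ⟨-, ho⟩ | ⟨h, -⟩⟩
        · rw [hj, Nat.sub_self] at ho
          exact (Nat.not_odd_iff_even.mpr Even.zero) ho
        · exact h rfl
  · -- not the last block
    have huj : u.1.val ≠ 2*k - 1 := fun h => hb (Fin.ext (by rw [h, hj]))
    have hu2 : u.1.val < 2*k - 1 := by have := u.1.isLt; omega
    by_cases hm : u.1.val = 2*k - 2
    · -- use block 0
      set b : Fin (2*k) := ⟨0, by omega⟩ with hbdef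
      have hbval : b.val = 0 := rfl
      refine ⟨⟨b, ⟨0, hα _⟩⟩, sig_ne (show u.1.val ≠ b.val by omega),
        nadj_to _ (by omega) ?_⟩
      have h1 : 2*k - 1 - max u.1.val b.val = 1 := by omega
      rw [h1]
      exact Nat.not_even_iff_odd.mpr odd_one
    · -- use block 2k-2
      set b : Fin (2*k) := ⟨2*k-2, by omega⟩ with hbdef
      have hbval : b.val = 2*k-2 := rfl
      refine ⟨⟨b, ⟨0, hα _⟩⟩, sig_ne (show u.1.val ≠ b.val by omega),
        nadj_to _ (by omega) ?_⟩
      have h1 : 2*k - 1 - max u.1.val b.val = 1 := by omega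
      rw [h1]
      exact Nat.not_even_iff_odd.mpr odd_one

private lemma ecc_eq_two (hk : 2 ≤ k) (hα : ∀ i, 1 ≤ α i)
    (j : Fin (2*k)) (hj : j.val = 2*k - 1) (hlast : 2 ≤ α j)
    (u : Σ i : Fin (2*k), Fin (α i)) :
    ecc (Cgraph (2*k) α) u = 2 := by
  apply le_antisymm
  · exact Finset.sup_le fun v _ => dist_le_two hk hα u v
  · obtain ⟨v, hne, hadj⟩ := far hk hα j hj hlast u
    calc 2 = (Cgraph (2*k) α).dist u v := (dist_eq_two hk hα hne hadj).symm
    _ ≤ _ := Finset.le_sup (f := fun v => (Cgraph (2*k) α).dist u v) (Finset.mem_univ v)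

open Classical in
private lemma eccMatrix_eq (hk : 2 ≤ k) (hα : ∀ i, 1 ≤ α i)
    (j : Fin (2*k)) (hj : j.val = 2*k - 1) (hlast : 2 ≤ α j)
    (u v : Σ i : Fin (2*k), Fin (α i)) :
    eccMatrix (Cgraph (2*k) α) u v =
      if u ≠ v ∧ ¬ (Cgraph (2*k) α).Adj u v then 2 else 0 := by
  rw [eccMatrix, Matrix.of_apply, ecc_eq_two hk hα j hj hlast,
    ecc_eq_two hk hα j hj hlast]
  simp only [min_self]
  by_cases hne : u = v
  · subst hne
    simp [SimpleGraph.dist_self]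
  by_cases hadj : (Cgraph (2*k) α).Adj u v
  · rw [SimpleGraph.dist_eq_one_iff_adj.mpr hadj]
    simp [hadj]
  · rw [dist_eq_two hk hα hne hadj]
    simp [hne, hadj]

end Aux

open Polynomial in
private lemma eval_charpoly_zero {n : ℕ} (Q : Matrix (Fin n) (Fin n) ℝ) (μ : ℝ)
    (S : Fin n → ℝ) (hS : S ≠ 0) (h : Q.mulVec S = μ • S) :
    Q.charpoly.eval μ = 0 := by
  have hdet : ((μ • (1 : Matrix (Fin n) (Fin n) ℝ)) - Q).det = 0 := by
    rw [← Matrix.exists_mulVec_eq_zero_iff]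
    refine ⟨S, hS, ?_⟩
    rw [Matrix.sub_mulVec, Matrix.smul_mulVec, Matrix.one_mulVec, h, sub_self]
  have : Q.charpoly.eval μ = ((charmatrix Q).map (Polynomial.eval μ)).det := by
    rw [Matrix.charpoly, ← Polynomial.coe_evalRingHom, ← RingHom.mapMatrix_apply,
      ← RingHom.map_det]
  rw [this, ← hdet]
  congr 1
  ext i j
  by_cases hij : i = j
  · subst hij
    simp [Matrix.smul_apply, Matrix.one_apply]
  · simp [Matrix.charmatrix_apply_ne _ _ _ hij, Matrix.smul_apply, Matrix.one_apply, hij]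

/-- `ε(G)` has at most `2k + 2` distinct eigenvalues. -/
theorem stmt16 (k : ℕ) (hk : 2 ≤ k) (α : Fin (2*k) → ℕ) (hα : ∀ i, 1 ≤ α i)
    (j : Fin (2*k)) (hj : j.val = 2*k - 1) (hlast : 2 ≤ α j) :
    ∃ s : Finset ℝ, s.card ≤ 2*k + 2 ∧
      ∀ μ : ℝ, (∃ x : (Σ i : Fin (2*k), Fin (α i)) → ℝ, x ≠ 0 ∧
          (eccMatrix (Cgraph (2*k) α)).mulVec x = μ • x) → μ ∈ s := by
  classical
  set G := Cgraph (2*k) α with hG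
  -- the block-level weight function
  set g : Fin (2*k) → Fin (2*k) → ℝ := fun a b =>
    if (a = b ∧ ¬ Odd (2*k - 1 - a.val)) ∨
        (a ≠ b ∧ ¬ Even (2*k - 1 - max a.val b.val)) then 2 else 0 with hg
  -- the quotient matrix
  set Q : Matrix (Fin (2*k)) (Fin (2*k)) ℝ := Matrix.of fun a b =>
    (α a : ℝ) * g a b - (if a = b then g a a else 0) with hQ
  refine ⟨Q.charpoly.roots.toFinset ∪ {0, -2}, ?_, ?_⟩
  · calc (Q.charpoly.roots.toFinset ∪ {0, -2}).card
        ≤ Q.charpoly.roots.toFinset.card + ({0, -2} : Finset ℝ).card :=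
          Finset.card_union_le _ _
      _ ≤ 2*k + 2 := by
          gcongr
          · calc Q.charpoly.roots.toFinset.card ≤ Multiset.card Q.charpoly.roots :=
                Multiset.toFinset_card_le _
              _ ≤ Q.charpoly.natDegree := Polynomial.card_roots' _
              _ = 2*k := by rw [Matrix.charpoly_natDegree_eq_dim]; simp
          · exact Finset.card_le_two
  · rintro μ ⟨x, hx, hEig⟩
    -- the eccentricity matrix in closed form
    have hE : ∀ u v, eccMatrix G u v = g u.1 v.1 - (if u = v then g u.1 u.1 else 0) := by
      intro u v
      rw [eccMatrix_eq hk hα j hj hlast]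
      by_cases huv : u = v
      · subst huv; simp
      rw [if_neg huv, sub_zero]
      by_cases hb : u.1 = v.1
      · -- same block
        by_cases ho : Odd (2*k - 1 - u.1.val)
        · rw [if_neg, hg]
          · simp only
            rw [if_neg]
            rintro (⟨-, h⟩ | ⟨h, -⟩)
            · exact h ho
            · exact h hb
          · rintro ⟨-, hnadj⟩
            exact hnadj ⟨huv, Or.inl ⟨hb, ho⟩⟩
        · rw [if_pos, hg]
          · simp only
            rw [if_pos (Or.inl ⟨hb, ho⟩)]
          · refine ⟨huv, ?_⟩
            rintro ⟨-, ⟨-, h⟩ | ⟨h, -⟩⟩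
            · exact ho h
            · exact h hb
      · -- different blocks
        by_cases he : Even (2*k - 1 - max u.1.val v.1.val)
        · rw [if_neg, hg]
          · simp only
            rw [if_neg]
            rintro (⟨h, -⟩ | ⟨-, h⟩)
            · exact hb h
            · exact h he
          · rintro ⟨-, hnadj⟩
            exact hnadj ⟨huv, Or.inr ⟨hb, he⟩⟩
        · rw [if_pos, hg]
          · simp only
            rw [if_pos (Or.inr ⟨hb, he⟩)]
          · refine ⟨huv, ?_⟩
            rintro ⟨-, ⟨h, -⟩ | ⟨-, h⟩⟩
            · exact hb h
            · exact he h
    -- block sums of the eigenvector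
    set S : Fin (2*k) → ℝ := fun i => ∑ t : Fin (α i), x ⟨i, t⟩ with hS
    -- a row of the matrix-vector product, in closed form
    have hrow : ∀ u : (Σ i : Fin (2*k), Fin (α i)),
        ∑ v, eccMatrix G u v * x v = (∑ i', g u.1 i' * S i') - g u.1 u.1 * x u := by
      intro u
      calc ∑ v, eccMatrix G u v * x v
          = ∑ v, (g u.1 v.1 * x v - (if u = v then g u.1 u.1 else 0) * x v) := by
            refine Finset.sum_congr rfl fun v _ => ?_
            rw [hE]; ring
        _ = (∑ v, g u.1 v.1 * x v) - ∑ v, (if u = v then g u.1 u.1 else 0) * x v :=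
            Finset.sum_sub_distrib _ _
        _ = (∑ i', g u.1 i' * S i') - g u.1 u.1 * x u := by
            congr 1
            · rw [← Finset.univ_sigma_univ, Finset.sum_sigma]
              refine Finset.sum_congr rfl fun i' _ => ?_
              rw [Finset.mul_sum]
            · rw [Finset.sum_eq_single u]
              · simp
              · intro v _ hv
                rw [if_neg (Ne.symm hv), zero_mul]
              · intro h
                exact absurd (Finset.mem_univ u) h
    -- the eigenvector equation, rewritten
    have hkey : ∀ u : (Σ i : Fin (2*k), Fin (α i)),
        (∑ i', g u.1 i' * S i') - g u.1 u.1 * x u = μ * x u := by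
      intro u
      rw [← hrow u]
      have := congrFun hEig u
      rw [Matrix.mulVec, dotProduct] at this
      rw [this, Pi.smul_apply, smul_eq_mul]
    by_cases hSz : S = 0
    · -- the zero-sum case: μ ∈ {0, -2}
      obtain ⟨u, hu⟩ := Function.ne_iff.mp hx
      have h0 := hkey u
      rw [hSz] at h0
      simp only [Pi.zero_apply, mul_zero, Finset.sum_const_zero, zero_sub] at h0
      have hu' : x u ≠ 0 := hu
      have hd : g u.1 u.1 = 0 ∨ g u.1 u.1 = 2 := by
        by_cases ho : Odd (2*k - 1 - u.1.val)
        · left; simp [hg, ho]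
        · right; simp [hg, ho]
      have hμ : μ = -(g u.1 u.1) :=
        (mul_right_cancel₀ hu' (by linarith [h0] : -(g u.1 u.1) * x u = μ * x u)).symm
      apply Finset.mem_union_right
      rcases hd with h | h <;> rw [hμ, h] <;> simp
    · -- the quotient case: μ is a root of the characteristic polynomial of Q
      apply Finset.mem_union_left
      rw [Multiset.mem_toFinset, Polynomial.mem_roots (Q.charpoly_monic).ne_zero]
      apply eval_charpoly_zero Q μ S hSz
      funext i
      have hQrow : ∑ i', Q i i' * S i'
          = (α i : ℝ) * (∑ i', g i i' * S i') - g i i * S i := by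
        calc ∑ i', Q i i' * S i'
            = ∑ i', ((α i : ℝ) * (g i i' * S i')
                - (if i = i' then g i i else 0) * S i') := by
              refine Finset.sum_congr rfl fun i' _ => ?_
              rw [hQ]; simp only [Matrix.of_apply]; ring
          _ = (α i : ℝ) * (∑ i', g i i' * S i') - g i i * S i := by
              rw [Finset.sum_sub_distrib, ← Finset.mul_sum]
              congr 1
              rw [Finset.sum_eq_single i]
              · simp
              · intro v _ hv
                rw [if_neg (Ne.symm hv), zero_mul]
              · intro h
                exact absurd (Finset.mem_univ i) h
      have hsum : ∑ t : Fin (α i), ((∑ i', g i i' * S i') - g i i * x ⟨i, t⟩)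
          = ∑ t : Fin (α i), μ * x ⟨i, t⟩ :=
        Finset.sum_congr rfl fun t _ => hkey ⟨i, t⟩
      rw [Finset.sum_sub_distrib, Finset.sum_const, ← Finset.mul_sum,
        ← Finset.mul_sum] at hsum
      simp only [Finset.card_univ, Fintype.card_fin, nsmul_eq_mul] at hsum
      have hSi : S i = ∑ t : Fin (α i), x ⟨i, t⟩ := rfl
      show ∑ i', Q i i' * S i' = (μ • S) i
      rw [hQrow, Pi.smul_apply, smul_eq_mul, ← hsum, hSi]
end
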